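/- Let M be a metrizable topological space, T > 0, and let Q be a Borel probability measure on the path space P(M × ℝ). For γ ∈ P(M × ℝ) and s ≥ 0, write τ_s(γ) for the second (real) component of γ(s). Assume: (i) Q({γ : τ_0(γ) = T}) = 1; (ii) Q({γ : τ_s(γ) ∈ [0, T] for all s ∈ [0, T]}) = 1; (iii) for all 0 ≤ a ≤ b ≤ T and all L ∈ σ_a, ∫_L (τ_b + b) dQ = ∫_L (τ_a + a) dQ and ∫_L (τ_b² + 2∫_0^b τ_r dr) dQ = ∫_L (τ_a² + 2∫_0^a τ_r dr) dQ. Then Q({γ : τ_s(γ) = T − s for all s ∈ [0, T]}) = 1; that is, Q concentrates on space-time curves that move backwards in time with unit speed. -/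

import Mathlib

open MeasureTheory Filter
open scoped NNReal Topology

/-- The σ-algebra on path space `C(ℝ≥0, S)` generated by the evaluation maps
`γ ↦ γ s` for `0 ≤ s ≤ a`. -/
def evalSigma (S : Type*) [TopologicalSpace S] [MeasurableSpace S] (a : ℝ≥0) :
    MeasurableSpace C(ℝ≥0, S) :=
  ⨆ s ∈ Set.Iic a, MeasurableSpace.comap (fun γ : C(ℝ≥0, S) => γ s) inferInstance

set_option maxHeartbeats 2000000 in
/-- a measure on path space over space-time `M × ℝ` satisfying the stated
martingale identities for the time component concentrates on space-time curves that move
backwards in time with unit speed. -/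
theorem concentration_on_backwards_unit_speed_curves
    {M : Type*} [TopologicalSpace M] [TopologicalSpace.MetrizableSpace M]
    [MeasurableSpace M] [BorelSpace M]
    [MeasurableSpace C(ℝ≥0, M × ℝ)] [BorelSpace C(ℝ≥0, M × ℝ)]
    (T : ℝ) (hT : 0 < T)
    (Q : Measure C(ℝ≥0, M × ℝ)) (hQ : IsProbabilityMeasure Q)
    (h0 : Q {γ : C(ℝ≥0, M × ℝ) | (γ 0).2 = T} = 1)
    (hrange : Q {γ : C(ℝ≥0, M × ℝ) | ∀ s : ℝ≥0, (s : ℝ) ≤ T → (γ s).2 ∈ Set.Icc 0 T} = 1)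
    (hmart1 : ∀ a b : ℝ≥0, a ≤ b → (b : ℝ) ≤ T →
      ∀ L : Set C(ℝ≥0, M × ℝ), MeasurableSet[evalSigma (M × ℝ) a] L →
        ∫ γ in L, ((γ b).2 + (b : ℝ)) ∂Q = ∫ γ in L, ((γ a).2 + (a : ℝ)) ∂Q)
    (hmart2 : ∀ a b : ℝ≥0, a ≤ b → (b : ℝ) ≤ T →
      ∀ L : Set C(ℝ≥0, M × ℝ), MeasurableSet[evalSigma (M × ℝ) a] L →
        ∫ γ in L, ((γ b).2 ^ 2 + 2 * ∫ r in (0 : ℝ)..(b : ℝ), (γ r.toNNReal).2) ∂Q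
          = ∫ γ in L, ((γ a).2 ^ 2 + 2 * ∫ r in (0 : ℝ)..(a : ℝ), (γ r.toNNReal).2) ∂Q) :
    Q {γ : C(ℝ≥0, M × ℝ) | ∀ s : ℝ≥0, (s : ℝ) ≤ T → (γ s).2 = T - s} = 1 := by
  classical
  have mτ : ∀ s : ℝ≥0, Measurable fun γ : C(ℝ≥0, M × ℝ) => (γ s).2 := fun s =>
    (continuous_snd.comp (continuous_eval_const s)).measurable
  -- the "range" set is closed
  set G : Set C(ℝ≥0, M × ℝ) :=
    {γ | ∀ s : ℝ≥0, (s : ℝ) ≤ T → (γ s).2 ∈ Set.Icc 0 T} with hGdef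
  have hGclosed : IsClosed G := by
    have : G = ⋂ s : ℝ≥0, {γ : C(ℝ≥0, M × ℝ) | (s : ℝ) ≤ T → (γ s).2 ∈ Set.Icc 0 T} := by
      ext γ; simp [hGdef, Set.mem_iInter]
    rw [this]
    refine isClosed_iInter fun s => ?_
    by_cases hs : (s : ℝ) ≤ T
    · have h1 : {γ : C(ℝ≥0, M × ℝ) | (s : ℝ) ≤ T → (γ s).2 ∈ Set.Icc 0 T}
          = (fun γ : C(ℝ≥0, M × ℝ) => (γ s).2) ⁻¹' Set.Icc 0 T := by
        ext γ; simp [hs]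
      rw [h1]
      exact isClosed_Icc.preimage (continuous_snd.comp (continuous_eval_const s))
    · have h1 : {γ : C(ℝ≥0, M × ℝ) | (s : ℝ) ≤ T → (γ s).2 ∈ Set.Icc 0 T} = Set.univ := by
        ext γ; simp [hs]
      rw [h1]; exact isClosed_univ
  have hGae : ∀ᵐ γ ∂Q, γ ∈ G := by
    rw [ae_iff]
    have : {γ : C(ℝ≥0, M × ℝ) | ¬ γ ∈ G} = Gᶜ := rfl
    rw [this, prob_compl_eq_zero_iff hGclosed.measurableSet]
    exact hrange
  have h0ae : ∀ᵐ γ ∂Q, (γ 0).2 = T := by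
    rw [ae_iff]
    exact (prob_compl_eq_zero_iff ((mτ 0) (measurableSet_singleton T))).mpr h0
  -- integrability of the time coordinate
  have intτ : ∀ b : ℝ≥0, (b : ℝ) ≤ T → Integrable (fun γ : C(ℝ≥0, M × ℝ) => (γ b).2) Q := by
    intro b hb
    refine (integrable_const T).mono' (mτ b).aestronglyMeasurable ?_
    filter_upwards [hGae] with γ hγ
    have h := hγ b hb
    rw [Real.norm_eq_abs, abs_le]
    exact ⟨by linarith [h.1], h.2⟩
  -- first moment
  have L1 : ∀ b : ℝ≥0, (b : ℝ) ≤ T → ∫ γ, (γ b).2 ∂Q = T - b := by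
    intro b hb
    have h := hmart1 0 b zero_le hb Set.univ MeasurableSet.univ
    rw [setIntegral_univ, setIntegral_univ] at h
    have h2 : ∫ γ, ((γ b).2 + (b : ℝ)) ∂Q = (∫ γ, (γ b).2 ∂Q) + b := by
      rw [integral_add (intτ b hb) (integrable_const _), integral_const]
      simp
    have h3 : ∫ γ, ((γ (0 : ℝ≥0)).2 + ((0 : ℝ≥0) : ℝ)) ∂Q = T := by
      rw [integral_congr_ae (g := fun _ => T) (by filter_upwards [h0ae] with γ hγ; simp [hγ])]
      simp
    rw [h2, h3] at h
    linarith
  -- joint measurability of the evaluation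
  have mF : Measurable (Function.uncurry
      fun (r : ℝ) (γ : C(ℝ≥0, M × ℝ)) => (γ r.toNNReal).2) := by
    apply measurable_uncurry_of_continuous_of_measurable
    · intro γ
      exact continuous_snd.comp (γ.continuous.comp continuous_real_toNNReal)
    · intro r; exact mτ r.toNNReal
  -- the key pointwise-in-time concentration
  have key : ∀ b : ℝ≥0, (b : ℝ) ≤ T → ∀ᵐ γ ∂Q, (γ b).2 = T - b := by
    intro b hb
    have hb0 : (0 : ℝ) ≤ (b : ℝ) := b.coe_nonneg
    set ν := (volume : Measure ℝ).restrict (Set.Ioc (0 : ℝ) (b : ℝ)) with hν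
    have hνfin : IsFiniteMeasure ν := by
      constructor
      rw [hν, Measure.restrict_apply_univ]
      exact measure_Ioc_lt_top
    -- integrability on the product
    have hint : Integrable (Function.uncurry
        fun (γ : C(ℝ≥0, M × ℝ)) (r : ℝ) => (γ r.toNNReal).2) (Q.prod ν) := by
      have hmeas : Measurable (Function.uncurry
          fun (γ : C(ℝ≥0, M × ℝ)) (r : ℝ) => (γ r.toNNReal).2) :=
        mF.comp measurable_swap
      refine (integrable_const T).mono' hmeas.aestronglyMeasurable ?_
      have h1 : ∀ᵐ p : C(ℝ≥0, M × ℝ) × ℝ ∂(Q.prod ν), p.1 ∈ G := by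
        rw [ae_iff]
        have he : {p : C(ℝ≥0, M × ℝ) × ℝ | ¬ p.1 ∈ G} = Gᶜ ×ˢ (Set.univ : Set ℝ) := by
          ext p; simp
        rw [he, Measure.prod_prod, prob_compl_eq_zero_iff hGclosed.measurableSet |>.mpr hrange,
          zero_mul]
      have h2 : ∀ᵐ p : C(ℝ≥0, M × ℝ) × ℝ ∂(Q.prod ν), p.2 ∈ Set.Ioc (0 : ℝ) (b : ℝ) := by
        rw [ae_iff]
        have he : {p : C(ℝ≥0, M × ℝ) × ℝ | ¬ p.2 ∈ Set.Ioc (0 : ℝ) (b : ℝ)}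
            = (Set.univ : Set C(ℝ≥0, M × ℝ)) ×ˢ (Set.Ioc (0 : ℝ) (b : ℝ))ᶜ := by
          ext p; simp
        rw [he, Measure.prod_prod]
        have : ν (Set.Ioc (0 : ℝ) (b : ℝ))ᶜ = 0 := by
          rw [hν, Measure.restrict_apply measurableSet_Ioc.compl]
          simp
        rw [this, mul_zero]
      filter_upwards [h1, h2] with p hp1 hp2
      have hle : ((p.2.toNNReal : ℝ)) ≤ T := by
        rw [Real.coe_toNNReal _ hp2.1.le]
        linarith [hp2.2]
      have h := hp1 p.2.toNNReal hle
      rw [Function.uncurry, Real.norm_eq_abs, abs_le]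
      exact ⟨by linarith [h.1], h.2⟩
    -- Fubini
    have L3 : ∫ γ, (∫ r in (0 : ℝ)..(b : ℝ), (γ r.toNNReal).2) ∂Q
        = T * b - (b : ℝ) ^ 2 / 2 := by
      have hswap := integral_integral_swap hint
      have hstep : ∫ γ, (∫ r in (0 : ℝ)..(b : ℝ), (γ r.toNNReal).2) ∂Q
          = ∫ γ, (∫ r, (γ r.toNNReal).2 ∂ν) ∂Q := by
        congr 1; funext γ
        rw [intervalIntegral.integral_of_le hb0]
      rw [hstep, hswap]
      have hinner : ∫ r, (∫ γ, (γ r.toNNReal).2 ∂Q) ∂ν = ∫ r, (T - r) ∂ν := by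
        refine integral_congr_ae ?_
        rw [hν]
        filter_upwards [ae_restrict_mem measurableSet_Ioc] with r hr
        have h := L1 r.toNNReal (by rw [Real.coe_toNNReal _ hr.1.le]; linarith [hr.2])
        rw [h, Real.coe_toNNReal _ hr.1.le]
      rw [hinner, hν, ← intervalIntegral.integral_of_le hb0,
        intervalIntegral.integral_sub intervalIntegrable_const
          intervalIntegral.intervalIntegrable_id,
        intervalIntegral.integral_const, integral_id]
      simp
      ring
    -- integrability of the running integral and of the square
    have intJ : Integrable (fun γ : C(ℝ≥0, M × ℝ) =>
        ∫ r in (0 : ℝ)..(b : ℝ), (γ r.toNNReal).2) Q := by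
      have h' := hint.integral_prod_left
      have heq : (fun γ : C(ℝ≥0, M × ℝ) =>
          ∫ r, (Function.uncurry fun (γ : C(ℝ≥0, M × ℝ)) (r : ℝ) => (γ r.toNNReal).2) (γ, r) ∂ν)
          = fun γ : C(ℝ≥0, M × ℝ) => ∫ r in (0 : ℝ)..(b : ℝ), (γ r.toNNReal).2 := by
        funext γ
        rw [intervalIntegral.integral_of_le hb0]
        rfl
      rw [heq] at h'
      exact h'
    have intτ2 : Integrable (fun γ : C(ℝ≥0, M × ℝ) => (γ b).2 ^ 2) Q := by
      refine (integrable_const (T ^ 2)).mono' ((mτ b).pow_const 2).aestronglyMeasurable ?_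
      filter_upwards [hGae] with γ hγ
      have h := hγ b hb
      rw [Real.norm_eq_abs, abs_pow]
      refine pow_le_pow_left₀ (abs_nonneg _) ?_ 2
      rw [abs_le]; exact ⟨by linarith [h.1], h.2⟩
    -- second moment
    have L2 : ∫ γ, (γ b).2 ^ 2 ∂Q = (T - b) ^ 2 := by
      have h := hmart2 0 b zero_le hb Set.univ MeasurableSet.univ
      rw [setIntegral_univ, setIntegral_univ] at h
      have h3 : ∫ γ, ((γ (0 : ℝ≥0)).2 ^ 2
          + 2 * ∫ r in (0 : ℝ)..(((0 : ℝ≥0)) : ℝ), (γ r.toNNReal).2) ∂Q = T ^ 2 := by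
        rw [integral_congr_ae (g := fun _ => T ^ 2)
          (by filter_upwards [h0ae] with γ hγ
              simp [hγ, intervalIntegral.integral_same])]
        simp
      have h2 : ∫ γ, ((γ b).2 ^ 2
          + 2 * ∫ r in (0 : ℝ)..((b : ℝ≥0) : ℝ), (γ r.toNNReal).2) ∂Q
          = (∫ γ, (γ b).2 ^ 2 ∂Q) + 2 * (T * b - (b : ℝ) ^ 2 / 2) := by
        rw [integral_add intτ2 (intJ.const_mul 2), integral_const_mul, L3]
      rw [h2, h3] at h
      nlinarith [h]
    -- the variance vanishes
    have intsq : Integrable (fun γ : C(ℝ≥0, M × ℝ) => ((γ b).2 - (T - b)) ^ 2) Q := by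
      refine (integrable_const (T ^ 2)).mono'
        (((mτ b).sub measurable_const).pow_const 2).aestronglyMeasurable ?_
      filter_upwards [hGae] with γ hγ
      have h := hγ b hb
      rw [Real.norm_eq_abs, abs_pow]
      refine pow_le_pow_left₀ (abs_nonneg _) ?_ 2
      rw [abs_le]
      constructor
      · linarith [h.1, h.2, hb, hb0]
      · linarith [h.1, h.2, hb, hb0]
    have hsq : ∫ γ, ((γ b).2 - (T - b)) ^ 2 ∂Q = 0 := by
      have hexp : (fun γ : C(ℝ≥0, M × ℝ) => ((γ b).2 - (T - b)) ^ 2)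
          = fun γ => (γ b).2 ^ 2 + ((-(2 * (T - b))) * (γ b).2 + (T - b) ^ 2) := by
        funext γ; ring
      have intg : Integrable (fun γ : C(ℝ≥0, M × ℝ) =>
          (-(2 * (T - (b : ℝ)))) * (γ b).2 + (T - (b : ℝ)) ^ 2) Q :=
        ((intτ b hb).const_mul _).add (integrable_const _)
      rw [hexp, integral_add intτ2 intg,
        integral_add ((intτ b hb).const_mul _) (integrable_const _),
        integral_const_mul, L1 b hb, L2, integral_const]
      simp
      ring
    have hzero := (integral_eq_zero_iff_of_nonneg
      (fun γ : C(ℝ≥0, M × ℝ) => sq_nonneg (((γ b).2 - (T - b)))) intsq).mp hsq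
    filter_upwards [hzero] with γ hγ
    have : ((γ b).2 - (T - b)) ^ 2 = 0 := hγ
    have := sq_eq_zero_iff.mp this
    linarith [this]
  -- a.e. concentration at all rational times simultaneously
  have hae : ∀ᵐ γ ∂Q, ∀ q : ℚ, 0 ≤ (q : ℝ) → (q : ℝ) ≤ T →
      (γ ((q : ℝ).toNNReal)).2 = T - q := by
    rw [ae_all_iff]
    intro q
    by_cases h1 : 0 ≤ (q : ℝ) ∧ (q : ℝ) ≤ T
    · have hcoe : (((q : ℝ).toNNReal : ℝ)) = (q : ℝ) := Real.coe_toNNReal _ h1.1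
      filter_upwards [key (q : ℝ).toNNReal (by rw [hcoe]; exact h1.2)] with γ hγ _ _
      rw [hγ, hcoe]
    · filter_upwards with γ hq1 hq2
      exact absurd ⟨hq1, hq2⟩ h1
  -- upgrade to all times via continuity
  have hfinal : ∀ᵐ γ ∂Q, ∀ s : ℝ≥0, (s : ℝ) ≤ T → (γ s).2 = T - s := by
    filter_upwards [hae] with γ hγ
    intro s hs
    set g : ℝ → ℝ := fun r => (γ r.toNNReal).2 - (T - r) with hg
    have hgc : Continuous g :=
      (continuous_snd.comp (γ.continuous.comp continuous_real_toNNReal)).sub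
        (continuous_const.sub continuous_id)
    have hZ : IsClosed {r : ℝ | g r = 0} := isClosed_eq hgc continuous_const
    have hsub : Set.Ioo (0 : ℝ) T ⊆ {r : ℝ | g r = 0} := by
      have hd : Dense (Set.range ((↑) : ℚ → ℝ)) := Rat.denseRange_cast
      have h1 : Set.Ioo (0 : ℝ) T ⊆ closure (Set.Ioo (0 : ℝ) T ∩ Set.range ((↑) : ℚ → ℝ)) :=
        hd.open_subset_closure_inter isOpen_Ioo
      have h2 : Set.Ioo (0 : ℝ) T ∩ Set.range ((↑) : ℚ → ℝ) ⊆ {r : ℝ | g r = 0} := by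
        rintro r ⟨hr, ⟨q, rfl⟩⟩
        have := hγ q hr.1.le hr.2.le
        simp only [hg, Set.mem_setOf_eq, this]
        ring
      calc Set.Ioo (0 : ℝ) T ⊆ closure (Set.Ioo (0 : ℝ) T ∩ Set.range ((↑) : ℚ → ℝ)) := h1
        _ ⊆ closure {r : ℝ | g r = 0} := closure_mono h2
        _ = {r : ℝ | g r = 0} := hZ.closure_eq
    have hIcc : Set.Icc (0 : ℝ) T ⊆ {r : ℝ | g r = 0} := by
      rw [← closure_Ioo hT.ne]
      exact hZ.closure_subset_iff.mpr hsub
    have hmem : ((s : ℝ)) ∈ Set.Icc (0 : ℝ) T := ⟨s.coe_nonneg, hs⟩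
    have := hIcc hmem
    simp only [hg, Set.mem_setOf_eq, Real.toNNReal_coe] at this
    linarith [this]
  have hmeas : MeasurableSet {γ : C(ℝ≥0, M × ℝ) | ∀ s : ℝ≥0, (s : ℝ) ≤ T → (γ s).2 = T - s} := by
    have : {γ : C(ℝ≥0, M × ℝ) | ∀ s : ℝ≥0, (s : ℝ) ≤ T → (γ s).2 = T - s}
        = ⋂ s : ℝ≥0, {γ : C(ℝ≥0, M × ℝ) | (s : ℝ) ≤ T → (γ s).2 = T - s} := by
      ext γ; simp [Set.mem_iInter]
    rw [this]
    refine (isClosed_iInter fun s => ?_).measurableSet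
    by_cases hs : (s : ℝ) ≤ T
    · have h1 : {γ : C(ℝ≥0, M × ℝ) | (s : ℝ) ≤ T → (γ s).2 = T - s}
          = (fun γ : C(ℝ≥0, M × ℝ) => (γ s).2) ⁻¹' {T - (s : ℝ)} := by
        ext γ; simp [hs]
      rw [h1]
      exact (isClosed_singleton).preimage
        (continuous_snd.comp (continuous_eval_const s))
    · have h1 : {γ : C(ℝ≥0, M × ℝ) | (s : ℝ) ≤ T → (γ s).2 = T - s} = Set.univ := by
        ext γ; simp [hs]
      rw [h1]; exact isClosed_univ
  refine (prob_compl_eq_zero_iff hmeas).mp ?_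
  exact ae_iff.mp hfinal
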